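/- arXiv:2011.07408 — 2 statements merged into one kernel-verified Lean document; each statement's English description precedes it below -/
import Mathlib

section
/- The polynomials n_j = ∏_{g∈G}(g·f_j), for 1 ≤ j ≤ k, are G-invariant and satisfy n_j(v) = 1 if v ∈ W_j and n_j(v) = 0 otherwise, for every v ∈ V. Consequently, n_1, ..., n_k form a separating set for F_q[V]^G. -/
open MvPolynomial

/-- The substitution action of a matrix `M` on polynomials, so that
`(polyAct M f)(v) = f (M.mulVec v)`.  Taking `M = g⁻¹` gives the action
`(g · f)(v) = f (g⁻¹ · v)` of a matrix group on the coordinate ring. -/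
noncomputable def polyAct {F : Type*} [CommSemiring F] {n : ℕ}
    (M : Matrix (Fin n) (Fin n) F) (f : MvPolynomial (Fin n) F) : MvPolynomial (Fin n) F :=
  aeval (fun i => ∑ j, C (M i j) * X j) f

/-- `f_w = (-1)^n ∏_i ∏_{a ∈ F \ {w_i}} (x_i - a)`, the indicator polynomial of `w`. -/
noncomputable def fW {F : Type*} [Field F] [Fintype F] [DecidableEq F] {n : ℕ}
    (w : Fin n → F) : MvPolynomial (Fin n) F :=
  (-1) ^ n * ∏ i, ∏ a ∈ (Finset.univ \ {w i}), (X i - C a)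

/-- `f_j = ∑_{w ∈ W_j} f_w`, the indicator polynomial of the subset `W ⊆ V`. -/
noncomputable def fOrb {F : Type*} [Field F] [Fintype F] [DecidableEq F] {n : ℕ}
    (W : Set (Fin n → F)) : MvPolynomial (Fin n) F :=
  ∑ w ∈ (Set.toFinite W).toFinset, fW w

/-- `n_j = ∏_{g ∈ G} (g · f)`, where `(g · f)(v) = f(g⁻¹ · v)`. -/
noncomputable def nInvPoly {F : Type*} [Field F] [Fintype F] {n : ℕ}
    (G : Subgroup (Matrix.GeneralLinearGroup (Fin n) F)) (f : MvPolynomial (Fin n) F) :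
    MvPolynomial (Fin n) F :=
  letI : Fintype G := Fintype.ofFinite G
  ∏ g : G, polyAct (((g : Matrix.GeneralLinearGroup (Fin n) F)⁻¹ :
      Matrix.GeneralLinearGroup (Fin n) F) : Matrix (Fin n) (Fin n) F) f

/-- The Reynolds average `h = (1/|G|) ∑_{g ∈ G} (g · f)`. -/
noncomputable def reynolds {F : Type*} [Field F] [Fintype F] {n : ℕ}
    (G : Subgroup (Matrix.GeneralLinearGroup (Fin n) F)) (f : MvPolynomial (Fin n) F) :
    MvPolynomial (Fin n) F :=
  letI : Fintype G := Fintype.ofFinite G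
  C ((Nat.card G : F)⁻¹) * ∑ g : G, polyAct (((g : Matrix.GeneralLinearGroup (Fin n) F)⁻¹ :
      Matrix.GeneralLinearGroup (Fin n) F) : Matrix (Fin n) (Fin n) F) f

/-- A monomial matrix: exactly one nonzero entry in each row and in each column. -/
def IsMonomialMatrix {F : Type*} [Zero F] {n : ℕ} (M : Matrix (Fin n) (Fin n) F) : Prop :=
  (∀ i, ∃! j, M i j ≠ 0) ∧ (∀ j, ∃! i, M i j ≠ 0)

section Aux

variable {F : Type*} {n : ℕ}

lemma eval_polyAct [CommSemiring F]
    (M : Matrix (Fin n) (Fin n) F) (f : MvPolynomial (Fin n) F) (v : Fin n → F) :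
    eval v (polyAct M f) = eval (M.mulVec v) f := by
  unfold polyAct
  rw [show eval v = RingHomClass.toRingHom (aeval (R := F) v) from (coe_aeval_eq_eval v).symm]
  simp only [AlgHom.toRingHom_eq_coe, RingHom.coe_coe, ← AlgHom.comp_apply, comp_aeval]
  have h : (fun i => aeval (R := F) v (∑ j, C (M i j) * X j)) = M.mulVec v := by
    funext i
    simp [Matrix.mulVec, dotProduct]
  rw [h]
  rfl

lemma polyAct_polyAct [CommSemiring F]
    (M N : Matrix (Fin n) (Fin n) F) (f : MvPolynomial (Fin n) F) :
    polyAct M (polyAct N f) = polyAct (N * M) f := by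
  unfold polyAct
  rw [← AlgHom.comp_apply, comp_aeval]
  apply congrArg (fun s => (aeval s : MvPolynomial (Fin n) F →ₐ[F] _) f)
  funext i
  calc aeval (fun i => ∑ j, C (M i j) * X j) (∑ j, C (N i j) * X j)
      = ∑ j, ∑ l, C (N i j) * (C (M j l) * X l) := by
        simp [Finset.mul_sum]
    _ = ∑ l, ∑ j, C (N i j * M j l) * X l := by
        rw [Finset.sum_comm]
        refine Finset.sum_congr rfl fun l _ => Finset.sum_congr rfl fun j _ => ?_
        rw [C_mul, mul_assoc]
    _ = ∑ l, C ((N * M) i l) * X l := by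
        refine Finset.sum_congr rfl fun l _ => ?_
        rw [Matrix.mul_apply, map_sum, Finset.sum_mul]

lemma polyAct_prod [CommSemiring F] {ι : Type*} (s : Finset ι)
    (M : Matrix (Fin n) (Fin n) F) (f : ι → MvPolynomial (Fin n) F) :
    polyAct M (∏ i ∈ s, f i) = ∏ i ∈ s, polyAct M (f i) := by
  unfold polyAct
  exact map_prod _ _ _

variable [Field F] [Fintype F] [DecidableEq F]

lemma prod_nonzero : ∏ b ∈ Finset.univ \ {(0:F)}, b = -1 := by
  let φ : Fˣ ↪ F := ⟨fun x => x, fun _ _ h => Units.ext h⟩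
  have hm : Finset.univ.map φ = Finset.univ \ {(0:F)} := by
    ext x
    simpa only [Finset.mem_map, Finset.mem_univ, Function.Embedding.coeFn_mk, true_and,
      Finset.mem_sdiff, Finset.mem_singleton, φ] using (show (∃ a : Fˣ, φ a = x) ↔ ¬x = 0 from isUnit_iff_ne_zero)
  rw [← hm, Finset.prod_map]
  have h2 : (∏ x : Fˣ, φ x) = ((∏ x : Fˣ, x : Fˣ) : F) :=
    (map_prod (Units.coeHom F) _ _).symm
  rw [h2, FiniteField.prod_univ_units_id_eq_neg_one]
  simp

lemma prod_sub (c : F) : ∏ a ∈ Finset.univ \ {c}, (c - a) = -1 := by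
  rw [← prod_nonzero (F := F)]
  refine Finset.prod_nbij' (fun a => c - a) (fun b => c - b) ?_ ?_ ?_ ?_ ?_ <;>
    intro a ha <;>
    simp only [Finset.mem_sdiff, Finset.mem_univ, true_and, Finset.mem_singleton] at ha ⊢
  · exact sub_ne_zero.mpr (Ne.symm ha)
  · intro h
    apply ha
    linear_combination -h
  · ring
  · ring

lemma eval_fW (w v : Fin n → F) : eval v (fW w) = if v = w then 1 else 0 := by
  unfold fW
  rw [map_mul, map_pow, map_prod]
  simp only [map_neg, map_one, map_prod, map_sub, eval_X, eval_C]
  by_cases h : v = w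
  · subst h
    rw [if_pos rfl]
    have : ∀ i, ∏ a ∈ Finset.univ \ {v i}, (v i - a) = -1 := fun i => prod_sub (v i)
    simp only [this, Finset.prod_const, Finset.card_univ, Fintype.card_fin]
    rw [← mul_pow]
    simp
  · rw [if_neg h]
    obtain ⟨i, hi⟩ : ∃ i, v i ≠ w i := by
      by_contra hc
      push_neg at hc
      exact h (funext hc)
    have : ∏ a ∈ Finset.univ \ {w i}, (v i - a) = 0 := by
      exact Finset.prod_eq_zero (i := v i) (by simp [hi]) (by ring)
    rw [Finset.prod_eq_zero (Finset.mem_univ i) this, mul_zero]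

lemma eval_fOrb_mem {W : Set (Fin n → F)} {v : Fin n → F} (h : v ∈ W) :
    eval v (fOrb W) = 1 := by
  unfold fOrb
  rw [map_sum]
  simp only [eval_fW]
  rw [Finset.sum_ite_eq, if_pos (by simpa using h)]

lemma eval_fOrb_not_mem {W : Set (Fin n → F)} {v : Fin n → F} (h : v ∉ W) :
    eval v (fOrb W) = 0 := by
  unfold fOrb
  rw [map_sum]
  simp only [eval_fW]
  rw [Finset.sum_ite_eq, if_neg (by simpa using h)]

lemma eval_nInvPoly (G : Subgroup (Matrix.GeneralLinearGroup (Fin n) F))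
    (f : MvPolynomial (Fin n) F) (v : Fin n → F) :
    letI : Fintype G := Fintype.ofFinite G
    eval v (nInvPoly G f) = ∏ g : G, eval ((((g : Matrix.GeneralLinearGroup (Fin n) F)⁻¹ :
      Matrix.GeneralLinearGroup (Fin n) F) : Matrix (Fin n) (Fin n) F).mulVec v) f := by
  letI : Fintype G := Fintype.ofFinite G
  unfold nInvPoly
  rw [map_prod]
  simp only [eval_polyAct]

lemma nInvPoly_invariant (G : Subgroup (Matrix.GeneralLinearGroup (Fin n) F))
    (g : Matrix.GeneralLinearGroup (Fin n) F) (hg : g ∈ G) (f : MvPolynomial (Fin n) F) :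
    polyAct ((g⁻¹ : Matrix.GeneralLinearGroup (Fin n) F) : Matrix (Fin n) (Fin n) F)
      (nInvPoly G f) = nInvPoly G f := by
  letI : Fintype G := Fintype.ofFinite G
  unfold nInvPoly
  rw [polyAct_prod]
  simp only [polyAct_polyAct]
  refine Fintype.prod_equiv (Equiv.mulLeft (⟨g, hg⟩ : G)) _ _ fun h => ?_
  congr 1

end Aux

/-- the polynomials `n_j = ∏_{g ∈ G} (g·f_j)` are `G`-invariant, take the
value `1` on `W_j` and `0` elsewhere, and hence form a separating set for `F_q[V]^G`. -/
theorem stmt2 {q n k : ℕ} (F : Type*) [Field F] [Fintype F] [DecidableEq F]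
    (hq : Fintype.card F = q)
    (G : Subgroup (Matrix.GeneralLinearGroup (Fin n) F))
    (W : Fin k → Set (Fin n → F))
    (horb : ∀ j, ∃ w : Fin n → F, W j =
      {u | ∃ g ∈ G, (g : Matrix (Fin n) (Fin n) F).mulVec w = u})
    (hcover : ∀ v : Fin n → F, ∃ j, v ∈ W j)
    (hdisj : ∀ j₁ j₂, j₁ ≠ j₂ → Disjoint (W j₁) (W j₂)) :
    -- the n_j are invariants
    (∀ j, ∀ g ∈ G,
      polyAct ((g⁻¹ : Matrix.GeneralLinearGroup (Fin n) F) : Matrix (Fin n) (Fin n) F)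
        (nInvPoly G (fOrb (W j))) = nInvPoly G (fOrb (W j))) ∧
    -- values: n_j(v) = 1 if v ∈ W_j and n_j(v) = 0 otherwise
    (∀ j, ∀ v : Fin n → F,
      (v ∈ W j → eval v (nInvPoly G (fOrb (W j))) = 1) ∧
      (v ∉ W j → eval v (nInvPoly G (fOrb (W j))) = 0)) ∧
    -- consequently n_1, …, n_k form a separating set
    (∀ u v : Fin n → F,
      (¬ ∃ g ∈ G, (g : Matrix (Fin n) (Fin n) F).mulVec u = v) →
      ∃ j, eval u (nInvPoly G (fOrb (W j))) ≠ eval v (nInvPoly G (fOrb (W j)))) := by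
  letI : Fintype G := Fintype.ofFinite G
  have hval : ∀ j, ∀ v : Fin n → F,
      (v ∈ W j → eval v (nInvPoly G (fOrb (W j))) = 1) ∧
      (v ∉ W j → eval v (nInvPoly G (fOrb (W j))) = 0) := by
    intro j v
    obtain ⟨w, hw⟩ := horb j
    constructor
    · intro hv
      rw [eval_nInvPoly]
      apply Finset.prod_eq_one
      intro g _
      apply eval_fOrb_mem
      rw [hw] at hv ⊢
      obtain ⟨h, hh, hhv⟩ := hv
      refine ⟨(g : Matrix.GeneralLinearGroup (Fin n) F)⁻¹ * h, mul_mem (inv_mem g.2) hh, ?_⟩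
      rw [Units.val_mul, ← Matrix.mulVec_mulVec, hhv]
    · intro hv
      rw [eval_nInvPoly]
      apply Finset.prod_eq_zero (Finset.mem_univ (1 : G))
      have h1 : ((((1 : G) : Matrix.GeneralLinearGroup (Fin n) F)⁻¹ :
          Matrix.GeneralLinearGroup (Fin n) F) : Matrix (Fin n) (Fin n) F).mulVec v = v := by
        simp
      rw [h1]
      exact eval_fOrb_not_mem hv
  refine ⟨fun j g hg => nInvPoly_invariant G g hg _, hval, ?_⟩
  intro u v hne
  obtain ⟨j, hj⟩ := hcover u
  refine ⟨j, ?_⟩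
  have hv : v ∉ W j := by
    intro hvj
    apply hne
    obtain ⟨w, hw⟩ := horb j
    rw [hw] at hj hvj
    obtain ⟨a, ha, hau⟩ := hj
    obtain ⟨b, hb, hbv⟩ := hvj
    refine ⟨b * a⁻¹, mul_mem hb (inv_mem ha), ?_⟩
    rw [← hau, ← hbv, Matrix.mulVec_mulVec, ← Units.val_mul, inv_mul_cancel_right]
  rw [(hval j u).1 hj, (hval j v).2 hv]
  exact one_ne_zero
end

section
/- For the action of S_4 on V = F_2^6 coming from its action on 2-element subsets of {1,2,3,4}, the sets S_3 = {f_1, f_2, f_3, f_4 + f_8} and S_4 = {f_1, f_2, f_3, f_5 + f_8} are separating sets for F_2[V]^{S_4} of the smallest possible size 4; in particular, β_sep(F_2[V]^{S_4}) = 4, i.e., the homogeneous invariants of degree at most 4 separate the S_4-orbits on V and 4 is the least such degree bound. -/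
open MvPolynomial

/-- 2-element subsets of `Fin N`, encoded as ordered pairs `(i, j)` with `i < j`. -/
abbrev Edge (N : ℕ) := {p : Fin N × Fin N // p.1 < p.2}

/-- The action of a permutation `σ ∈ S_N` on edges: `σ·{i,j} = {σ(i),σ(j)}`. -/
def edgeMap {N : ℕ} (σ : Equiv.Perm (Fin N)) (e : Edge N) : Edge N :=
  ⟨(min (σ e.1.1) (σ e.1.2), max (σ e.1.1) (σ e.1.2)), by
    have h : σ e.1.1 ≠ σ e.1.2 := fun h => absurd (σ.injective h) (ne_of_lt e.2)
    exact min_lt_max.mpr h⟩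

/-- orbit sum `o(f)`: the sum over the (distinct elements of the) `S_N`-orbit of `f`. -/
noncomputable def orbitSum {N : ℕ} (f : MvPolynomial (Edge N) (ZMod 2)) :
    MvPolynomial (Edge N) (ZMod 2) :=
  letI : DecidableEq (MvPolynomial (Edge N) (ZMod 2)) := Classical.decEq _
  ∑ h ∈ Finset.image (fun σ : Equiv.Perm (Fin N) => rename (edgeMap σ) f) Finset.univ, h

/-- Two points of `V = F_2^(N choose 2)` lie in the same `S_N`-orbit. -/
def GraphSameOrbit {N : ℕ} (u v : Edge N → ZMod 2) : Prop :=
  ∃ σ : Equiv.Perm (Fin N), ∀ e, u (edgeMap σ e) = v e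

/-- A set of polynomials is separating if it separates any two points of `V`
lying in different `S_N`-orbits. -/
def IsSepGraph {N : ℕ} (S : Set (MvPolynomial (Edge N) (ZMod 2))) : Prop :=
  ∀ u v : Edge N → ZMod 2, ¬ GraphSameOrbit u v → ∃ f ∈ S, eval u f ≠ eval v f
namespace S4graphs

/- The six edges of the complete graph on `{1,2,3,4}` (0-indexed), ordered
x12, x13, x14, x23, x24, x34. -/
def e12 : Edge 4 := ⟨(0, 1), by decide⟩
def e13 : Edge 4 := ⟨(0, 2), by decide⟩
def e14 : Edge 4 := ⟨(0, 3), by decide⟩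
def e23 : Edge 4 := ⟨(1, 2), by decide⟩
def e24 : Edge 4 := ⟨(1, 3), by decide⟩
def e34 : Edge 4 := ⟨(2, 3), by decide⟩

noncomputable def f1 : MvPolynomial (Edge 4) (ZMod 2) := orbitSum (X e12)
noncomputable def f2 : MvPolynomial (Edge 4) (ZMod 2) := orbitSum (X e12 * X e13)
noncomputable def f3 : MvPolynomial (Edge 4) (ZMod 2) := orbitSum (X e12 * X e34)
noncomputable def f4 : MvPolynomial (Edge 4) (ZMod 2) := orbitSum (X e12 * X e13 * X e14)
noncomputable def f5 : MvPolynomial (Edge 4) (ZMod 2) := orbitSum (X e12 * X e13 * X e23)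
noncomputable def f6 : MvPolynomial (Edge 4) (ZMod 2) := orbitSum (X e12 * X e13 * X e24)
noncomputable def f7 : MvPolynomial (Edge 4) (ZMod 2) :=
  orbitSum (X e12 * X e13 * X e14 * X e24)
noncomputable def f8 : MvPolynomial (Edge 4) (ZMod 2) :=
  orbitSum (X e12 * X e13 * X e24 * X e34)
noncomputable def f9 : MvPolynomial (Edge 4) (ZMod 2) :=
  orbitSum (X e12 * X e13 * X e14 * X e23 * X e24)
noncomputable def f10 : MvPolynomial (Edge 4) (ZMod 2) :=
  X e12 * X e13 * X e14 * X e23 * X e24 * X e34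

/-- A polynomial is `S_4`-invariant. -/
def IsInv (f : MvPolynomial (Edge 4) (ZMod 2)) : Prop :=
  ∀ σ : Equiv.Perm (Fin 4), rename (edgeMap σ) f = f

/-- The set of all `S_4`-invariant homogeneous polynomials of degree at most `d`. -/
def HomInv (d : ℕ) : Set (MvPolynomial (Edge 4) (ZMod 2)) :=
  {f | IsInv f ∧ ∃ e ≤ d, f.IsHomogeneous e}

section Aux
open Finset

instance {N : ℕ} (u v : Edge N → ZMod 2) : Decidable (GraphSameOrbit u v) := by
  unfold GraphSameOrbit; infer_instance

lemma edgeMap_one (e : Edge 4) : edgeMap 1 e = e := by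
  unfold edgeMap
  apply Subtype.ext
  have h := e.2
  simp only [Equiv.Perm.coe_one, id_eq]
  exact Prod.ext (min_eq_left h.le) (max_eq_right h.le)

lemma edgeMap_mul (σ τ : Equiv.Perm (Fin 4)) (e : Edge 4) :
    edgeMap σ (edgeMap τ e) = edgeMap (σ * τ) e := by
  unfold edgeMap
  apply Subtype.ext
  simp only [Equiv.Perm.mul_apply]
  rcases le_total (τ e.1.1) (τ e.1.2) with h | h
  · rw [min_eq_left h, max_eq_right h]
  · rw [min_eq_right h, max_eq_left h]
    exact Prod.ext (min_comm _ _) (max_comm _ _)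

lemma edgeMap_leftInv (σ : Equiv.Perm (Fin 4)) (e : Edge 4) : edgeMap σ⁻¹ (edgeMap σ e) = e := by
  rw [edgeMap_mul, inv_mul_cancel]; exact edgeMap_one e

lemma edgeMap_injective (σ : Equiv.Perm (Fin 4)) : Function.Injective (edgeMap σ) :=
  Function.LeftInverse.injective (edgeMap_leftInv σ)

lemma gso_symm {u v : Edge 4 → ZMod 2} (h : GraphSameOrbit u v) : GraphSameOrbit v u := by
  obtain ⟨σ, hσ⟩ := h
  refine ⟨σ⁻¹, fun e => ?_⟩
  rw [← hσ (edgeMap σ⁻¹ e), edgeMap_mul, mul_inv_cancel, edgeMap_one]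

lemma gso_trans {u v w : Edge 4 → ZMod 2} (h : GraphSameOrbit u v) (h' : GraphSameOrbit v w) :
    GraphSameOrbit u w := by
  obtain ⟨σ, hσ⟩ := h
  obtain ⟨τ, hτ⟩ := h'
  refine ⟨σ * τ, fun e => ?_⟩
  rw [← edgeMap_mul, hσ, hτ]

lemma eval_eq_of_gso {u v : Edge 4 → ZMod 2} (h : GraphSameOrbit u v)
    {f : MvPolynomial (Edge 4) (ZMod 2)} (hf : IsInv f) : eval u f = eval v f := by
  obtain ⟨σ, hσ⟩ := h
  have hv : v = u ∘ edgeMap σ := funext fun e => (hσ e).symm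
  rw [hv, ← eval_rename, hf σ]

/-! ### Orbits of edge subsets -/

def orbitF (A : Finset (Edge 4)) : Finset (Finset (Edge 4)) :=
  Finset.image (fun σ => A.image (edgeMap σ)) Finset.univ

lemma image_edgeMap_one (A : Finset (Edge 4)) : A.image (edgeMap 1) = A := by
  have : edgeMap (1 : Equiv.Perm (Fin 4)) = id := funext edgeMap_one
  rw [this, Finset.image_id]

lemma image_image_edgeMap (σ τ : Equiv.Perm (Fin 4)) (A : Finset (Edge 4)) :
    (A.image (edgeMap τ)).image (edgeMap σ) = A.image (edgeMap (σ * τ)) := by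
  rw [Finset.image_image]
  exact Finset.image_congr fun e _ => edgeMap_mul σ τ e

lemma mem_orbitF_self (A : Finset (Edge 4)) : A ∈ orbitF A :=
  Finset.mem_image.2 ⟨1, Finset.mem_univ _, image_edgeMap_one A⟩

lemma orbitF_image (σ : Equiv.Perm (Fin 4)) (A : Finset (Edge 4)) :
    orbitF (A.image (edgeMap σ)) = orbitF A := by
  unfold orbitF
  ext B
  simp only [Finset.mem_image, Finset.mem_univ, true_and]
  constructor
  · rintro ⟨τ, rfl⟩
    exact ⟨τ * σ, (image_image_edgeMap τ σ A).symm⟩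
  · rintro ⟨τ, rfl⟩
    refine ⟨τ * σ⁻¹, ?_⟩
    rw [image_image_edgeMap, inv_mul_cancel_right]

/-! ### Orbit sums of squarefree monomials -/

lemma prodX_injective : Function.Injective
    (fun B : Finset (Edge 4) => ∏ e ∈ B, (X e : MvPolynomial (Edge 4) (ZMod 2))) := by
  have key : ∀ B C : Finset (Edge 4),
      (∏ e ∈ B, (X e : MvPolynomial (Edge 4) (ZMod 2))) = ∏ e ∈ C, X e → C ⊆ B := by
    intro B C h a haC
    by_contra haB
    have h1 : eval (fun e => if e ∈ B then (1 : ZMod 2) else 0)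
        (∏ e ∈ B, (X e : MvPolynomial (Edge 4) (ZMod 2))) = 1 := by
      rw [map_prod]
      refine Finset.prod_eq_one fun e he => ?_
      simp [he]
    have h2 : eval (fun e => if e ∈ B then (1 : ZMod 2) else 0)
        (∏ e ∈ C, (X e : MvPolynomial (Edge 4) (ZMod 2))) = 0 := by
      rw [map_prod]
      refine Finset.prod_eq_zero haC ?_
      simp [haB]
    rw [h, h2] at h1
    exact one_ne_zero h1.symm
  intro B C h
  exact (Finset.Subset.antisymm (key C B h.symm) (key B C h))

lemma image_inst_irrel {α β : Type*} (i1 i2 : DecidableEq β) (f : α → β) (s : Finset α) :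
    @Finset.image _ _ i1 f s = @Finset.image _ _ i2 f s := by
  rw [Subsingleton.elim i1 i2]

lemma orbitSum_def (f : MvPolynomial (Edge 4) (ZMod 2)) :
    orbitSum f = ∑ h ∈ Finset.image
      (fun σ : Equiv.Perm (Fin 4) => rename (edgeMap σ) f) Finset.univ, h := by
  have h0 : orbitSum f = ∑ h ∈ @Finset.image _ _ (Classical.decEq _)
      (fun σ : Equiv.Perm (Fin 4) => rename (edgeMap σ) f) Finset.univ, h := rfl
  rw [h0, image_inst_irrel]

lemma orbitSum_prodX (A : Finset (Edge 4)) :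
    orbitSum (∏ e ∈ A, (X e : MvPolynomial (Edge 4) (ZMod 2))) =
      ∑ B ∈ orbitF A, ∏ e ∈ B, (X e : MvPolynomial (Edge 4) (ZMod 2)) := by
  rw [orbitSum_def]
  have h1 : Finset.image
      (fun σ : Equiv.Perm (Fin 4) =>
        rename (edgeMap σ) (∏ e ∈ A, (X e : MvPolynomial (Edge 4) (ZMod 2)))) Finset.univ
      = Finset.image (fun B : Finset (Edge 4) =>
          ∏ e ∈ B, (X e : MvPolynomial (Edge 4) (ZMod 2))) (orbitF A) := by
    unfold orbitF
    rw [Finset.image_image]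
    apply Finset.image_congr
    intro σ _
    simp only [Function.comp]
    rw [map_prod, Finset.prod_image (fun x _ y _ h => edgeMap_injective σ h)]
    simp [rename_X]
  rw [h1]
  exact Finset.sum_image (fun x _ y _ h => prodX_injective h)

lemma isInv_orbitSum (f : MvPolynomial (Edge 4) (ZMod 2)) : IsInv (orbitSum f) := by
  intro σ
  rw [orbitSum_def, map_sum]
  have hren : ∀ (ρ : Equiv.Perm (Fin 4)) (a : MvPolynomial (Edge 4) (ZMod 2)),
      a ∈ Finset.image (fun σ : Equiv.Perm (Fin 4) => rename (edgeMap σ) f) Finset.univ →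
      rename (edgeMap ρ) a ∈
        Finset.image (fun σ : Equiv.Perm (Fin 4) => rename (edgeMap σ) f) Finset.univ := by
    intro ρ a ha
    obtain ⟨τ, _, rfl⟩ := Finset.mem_image.mp ha
    refine Finset.mem_image.mpr ⟨ρ * τ, Finset.mem_univ _, ?_⟩
    have hcomp : edgeMap ρ ∘ edgeMap τ = edgeMap (ρ * τ) := funext (edgeMap_mul ρ τ)
    rw [rename_rename, hcomp]
  refine Finset.sum_bij' (fun h _ => rename (edgeMap σ) h) (fun h _ => rename (edgeMap σ⁻¹) h)
    (fun a ha => hren σ a ha) (fun a ha => hren σ⁻¹ a ha) ?_ ?_ ?_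
  · intro a _
    show rename (edgeMap σ⁻¹) (rename (edgeMap σ) a) = a
    rw [rename_rename]
    have h : edgeMap σ⁻¹ ∘ edgeMap σ = id := funext (edgeMap_leftInv σ)
    rw [h, rename_id, AlgHom.id_apply]
  · intro a _
    show rename (edgeMap σ) (rename (edgeMap σ⁻¹) a) = a
    rw [rename_rename]
    have h : edgeMap σ ∘ edgeMap σ⁻¹ = id := funext fun e => by
      show edgeMap σ (edgeMap σ⁻¹ e) = e
      rw [edgeMap_mul, mul_inv_cancel, edgeMap_one]
    rw [h, rename_id, AlgHom.id_apply]
  · intro a _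
    rfl

end Aux
section Concrete

/-- indicator point of an edge subset -/
def ind (A : Finset (Edge 4)) : Edge 4 → ZMod 2 := fun e => if e ∈ A then 1 else 0

def D1 : Finset (Finset (Edge 4)) := {{e12}, {e13}, {e14}, {e23}, {e24}, {e34}}
def D2 : Finset (Finset (Edge 4)) :=
  {{e12, e13}, {e12, e14}, {e12, e23}, {e12, e24}, {e13, e14}, {e13, e23},
   {e13, e34}, {e14, e24}, {e14, e34}, {e23, e24}, {e23, e34}, {e24, e34}}
def D3 : Finset (Finset (Edge 4)) := {{e12, e34}, {e13, e24}, {e14, e23}}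
def D4 : Finset (Finset (Edge 4)) :=
  {{e12, e13, e14}, {e12, e23, e24}, {e13, e23, e34}, {e14, e24, e34}}
def D5 : Finset (Finset (Edge 4)) :=
  {{e12, e13, e23}, {e12, e14, e24}, {e13, e14, e34}, {e23, e24, e34}}
def D8 : Finset (Finset (Edge 4)) :=
  {{e12, e13, e24, e34}, {e12, e14, e23, e34}, {e13, e14, e23, e24}}

lemma orbitF_D1 : orbitF {e12} = D1 := by decide
lemma orbitF_D2 : orbitF {e12, e13} = D2 := by decide
lemma orbitF_D3 : orbitF {e12, e34} = D3 := by decide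
lemma orbitF_D4 : orbitF {e12, e13, e14} = D4 := by decide
lemma orbitF_D5 : orbitF {e12, e13, e23} = D5 := by decide
lemma orbitF_D8 : orbitF {e12, e13, e24, e34} = D8 := by decide

lemma f1_eq : f1 = ∑ B ∈ D1, ∏ e ∈ B, (X e : MvPolynomial (Edge 4) (ZMod 2)) := by
  have h : (X e12 : MvPolynomial (Edge 4) (ZMod 2)) = ∏ e ∈ ({e12} : Finset (Edge 4)), X e := by
    rw [Finset.prod_singleton]
  show orbitSum (X e12) = _
  rw [h, orbitSum_prodX, orbitF_D1]

lemma f2_eq : f2 = ∑ B ∈ D2, ∏ e ∈ B, (X e : MvPolynomial (Edge 4) (ZMod 2)) := by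
  have h : (X e12 * X e13 : MvPolynomial (Edge 4) (ZMod 2))
      = ∏ e ∈ ({e12, e13} : Finset (Edge 4)), X e := by
    rw [Finset.prod_insert (by decide), Finset.prod_singleton]
  show orbitSum (X e12 * X e13) = _
  rw [h, orbitSum_prodX, orbitF_D2]

lemma f3_eq : f3 = ∑ B ∈ D3, ∏ e ∈ B, (X e : MvPolynomial (Edge 4) (ZMod 2)) := by
  have h : (X e12 * X e34 : MvPolynomial (Edge 4) (ZMod 2))
      = ∏ e ∈ ({e12, e34} : Finset (Edge 4)), X e := by
    rw [Finset.prod_insert (by decide), Finset.prod_singleton]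
  show orbitSum (X e12 * X e34) = _
  rw [h, orbitSum_prodX, orbitF_D3]

lemma f4_eq : f4 = ∑ B ∈ D4, ∏ e ∈ B, (X e : MvPolynomial (Edge 4) (ZMod 2)) := by
  have h : (X e12 * X e13 * X e14 : MvPolynomial (Edge 4) (ZMod 2))
      = ∏ e ∈ ({e12, e13, e14} : Finset (Edge 4)), X e := by
    rw [Finset.prod_insert (by decide), Finset.prod_insert (by decide), Finset.prod_singleton,
      mul_assoc]
  show orbitSum (X e12 * X e13 * X e14) = _
  rw [h, orbitSum_prodX, orbitF_D4]

lemma f5_eq : f5 = ∑ B ∈ D5, ∏ e ∈ B, (X e : MvPolynomial (Edge 4) (ZMod 2)) := by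
  have h : (X e12 * X e13 * X e23 : MvPolynomial (Edge 4) (ZMod 2))
      = ∏ e ∈ ({e12, e13, e23} : Finset (Edge 4)), X e := by
    rw [Finset.prod_insert (by decide), Finset.prod_insert (by decide), Finset.prod_singleton,
      mul_assoc]
  show orbitSum (X e12 * X e13 * X e23) = _
  rw [h, orbitSum_prodX, orbitF_D5]

lemma f8_eq : f8 = ∑ B ∈ D8, ∏ e ∈ B, (X e : MvPolynomial (Edge 4) (ZMod 2)) := by
  have h : (X e12 * X e13 * X e24 * X e34 : MvPolynomial (Edge 4) (ZMod 2))
      = ∏ e ∈ ({e12, e13, e24, e34} : Finset (Edge 4)), X e := by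
    rw [Finset.prod_insert (by decide), Finset.prod_insert (by decide),
      Finset.prod_insert (by decide), Finset.prod_singleton, mul_assoc, mul_assoc]
  show orbitSum (X e12 * X e13 * X e24 * X e34) = _
  rw [h, orbitSum_prodX, orbitF_D8]

/-- evaluation of a sum of squarefree monomials -/
def GD (D : Finset (Finset (Edge 4))) (u : Edge 4 → ZMod 2) : ZMod 2 :=
  ∑ B ∈ D, ∏ e ∈ B, u e

lemma eval_sumProd (D : Finset (Finset (Edge 4))) (u : Edge 4 → ZMod 2) :
    eval u (∑ B ∈ D, ∏ e ∈ B, (X e : MvPolynomial (Edge 4) (ZMod 2))) = GD D u := by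
  rw [map_sum]
  exact Finset.sum_congr rfl fun B _ => by rw [map_prod]; exact Finset.prod_congr rfl fun e _ => eval_X e

/-- homogeneity of sums of squarefree monomials -/
lemma homog_sumProd (D : Finset (Finset (Edge 4))) (n : ℕ) (hD : ∀ B ∈ D, B.card = n) :
    (∑ B ∈ D, ∏ e ∈ B, (X e : MvPolynomial (Edge 4) (ZMod 2))).IsHomogeneous n := by
  apply MvPolynomial.IsHomogeneous.sum
  intro B hB
  have h := MvPolynomial.IsHomogeneous.prod B (fun e => (X e : MvPolynomial (Edge 4) (ZMod 2)))
    (fun _ => 1) (fun i _ => isHomogeneous_X _ _)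
  rwa [Finset.sum_const, smul_eq_mul, mul_one, hD B hB] at h

end Concrete
section Reps

def repL : List (Finset (Edge 4)) :=
  [∅, {e12}, {e12, e13}, {e12, e34}, {e12, e13, e14}, {e12, e13, e23}, {e12, e13, e24},
   {e12, e13, e14, e23}, {e12, e13, e24, e34}, {e12, e13, e14, e23, e24},
   {e12, e13, e14, e23, e24, e34}]

def reps : Fin 11 → (Edge 4 → ZMod 2) := fun i => ind (repL.get i)

set_option maxHeartbeats 2000000 in
set_option maxRecDepth 40000 in
lemma fact_pairwise : ∀ i j : Fin 11, i ≠ j → ¬ GraphSameOrbit (reps i) (reps j) := by decide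

set_option maxHeartbeats 8000000 in
set_option maxRecDepth 100000 in
lemma fact_cover : ∀ u : Edge 4 → ZMod 2, ∃ i : Fin 11, GraphSameOrbit u (reps i) := by decide

set_option maxHeartbeats 2000000 in
set_option maxRecDepth 40000 in
lemma fact_sep3 : ∀ i j : Fin 11, i ≠ j →
    GD D1 (reps i) ≠ GD D1 (reps j) ∨ GD D2 (reps i) ≠ GD D2 (reps j) ∨
    GD D3 (reps i) ≠ GD D3 (reps j) ∨
    GD D4 (reps i) + GD D8 (reps i) ≠ GD D4 (reps j) + GD D8 (reps j) := by decide

set_option maxHeartbeats 2000000 in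
set_option maxRecDepth 40000 in
lemma fact_sep4 : ∀ i j : Fin 11, i ≠ j →
    GD D1 (reps i) ≠ GD D1 (reps j) ∨ GD D2 (reps i) ≠ GD D2 (reps j) ∨
    GD D3 (reps i) ≠ GD D3 (reps j) ∨
    GD D5 (reps i) + GD D8 (reps i) ≠ GD D5 (reps j) + GD D8 (reps j) := by decide

set_option maxHeartbeats 2000000 in
set_option maxRecDepth 40000 in
lemma fact_sep5 : ∀ i j : Fin 11, i ≠ j →
    GD D1 (reps i) ≠ GD D1 (reps j) ∨ GD D2 (reps i) ≠ GD D2 (reps j) ∨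
    GD D3 (reps i) ≠ GD D3 (reps j) ∨ GD D4 (reps i) ≠ GD D4 (reps j) ∨
    GD D8 (reps i) ≠ GD D8 (reps j) := by decide

def U8 : Finset (Edge 4) := {e12, e13, e24, e34}

set_option maxHeartbeats 2000000 in
set_option maxRecDepth 40000 in
lemma fact_notorbit : ¬ GraphSameOrbit (ind U8) (ind ∅) := by decide

set_option maxHeartbeats 8000000 in
set_option maxRecDepth 100000 in
lemma fact_key : ∀ A : Finset (Edge 4), A.card ≤ 3 →
    ((orbitF A).filter (· ⊆ U8)).card % 2 =
    ((orbitF A).filter (· ⊆ (∅ : Finset (Edge 4)))).card % 2 := by decide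

lemma sep_engine {u v : Edge 4 → ZMod 2} (h : ¬ GraphSameOrbit u v) :
    ∃ i j : Fin 11, i ≠ j ∧ GraphSameOrbit u (reps i) ∧ GraphSameOrbit v (reps j) := by
  obtain ⟨i, hi⟩ := fact_cover u
  obtain ⟨j, hj⟩ := fact_cover v
  refine ⟨i, j, ?_, hi, hj⟩
  rintro rfl
  exact h (gso_trans hi (gso_symm hj))

end Reps
section DegreeThree

lemma zmod2_ne_zero {x : ZMod 2} (h : x ≠ 0) : x = 1 := by revert h; revert x; decide

lemma eval_ind_eq (f : MvPolynomial (Edge 4) (ZMod 2)) (W : Finset (Edge 4)) :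
    eval (ind W) f = ∑ d ∈ f.support, (if d.support ⊆ W then (1 : ZMod 2) else 0) := by
  rw [eval_eq]
  apply Finset.sum_congr rfl
  intro d hd
  have hc : MvPolynomial.coeff d f = 1 := zmod2_ne_zero (MvPolynomial.mem_support_iff.mp hd)
  rw [hc, one_mul]
  by_cases hsub : d.support ⊆ W
  · rw [if_pos hsub]
    refine Finset.prod_eq_one fun i hi => ?_
    rw [show ind W i = 1 from if_pos (hsub hi), one_pow]
  · rw [if_neg hsub]
    obtain ⟨a, haS, haW⟩ := Finset.not_subset.mp hsub
    refine Finset.prod_eq_zero haS ?_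
    rw [show ind W a = 0 from if_neg haW]
    exact zero_pow (Finsupp.mem_support_iff.mp haS)

lemma support_closed {f : MvPolynomial (Edge 4) (ZMod 2)} (hf : IsInv f)
    (σ : Equiv.Perm (Fin 4)) {d : Edge 4 →₀ ℕ} (hd : d ∈ f.support) :
    Finsupp.mapDomain (edgeMap σ) d ∈ f.support := by
  rw [MvPolynomial.mem_support_iff] at hd ⊢
  rwa [← hf σ, coeff_rename_mapDomain _ (edgeMap_injective σ)]

lemma mapDomain_edgeMap_support (σ : Equiv.Perm (Fin 4)) (d : Edge 4 →₀ ℕ) :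
    (Finsupp.mapDomain (edgeMap σ) d).support = d.support.image (edgeMap σ) :=
  Finsupp.mapDomain_support_of_injective (edgeMap_injective σ) d

lemma mapDomain_edgeMap_inv (σ : Equiv.Perm (Fin 4)) (d : Edge 4 →₀ ℕ) :
    Finsupp.mapDomain (edgeMap σ⁻¹) (Finsupp.mapDomain (edgeMap σ) d) = d := by
  rw [← Finsupp.mapDomain_comp]
  have h : edgeMap σ⁻¹ ∘ edgeMap σ = id := funext (edgeMap_leftInv σ)
  rw [h, Finsupp.mapDomain_id]

lemma mapDomain_edgeMap_inv' (σ : Equiv.Perm (Fin 4)) (d : Edge 4 →₀ ℕ) :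
    Finsupp.mapDomain (edgeMap σ) (Finsupp.mapDomain (edgeMap σ⁻¹) d) = d := by
  rw [← Finsupp.mapDomain_comp]
  have h : edgeMap σ ∘ edgeMap σ⁻¹ = id := funext fun e => by
    show edgeMap σ (edgeMap σ⁻¹ e) = e
    rw [edgeMap_mul, mul_inv_cancel, edgeMap_one]
  rw [h, Finsupp.mapDomain_id]

lemma card_fiber_eq (f : MvPolynomial (Edge 4) (ZMod 2)) (hf : IsInv f)
    (σ : Equiv.Perm (Fin 4)) (A : Finset (Edge 4)) :
    (f.support.filter (fun d => d.support = A.image (edgeMap σ))).card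
      = (f.support.filter (fun d => d.support = A)).card := by
  refine Finset.card_bij' (fun d _ => Finsupp.mapDomain (edgeMap σ⁻¹) d)
    (fun d _ => Finsupp.mapDomain (edgeMap σ) d) ?_ ?_ ?_ ?_
  · intro d hd
    obtain ⟨hdS, hds⟩ := Finset.mem_filter.mp hd
    refine Finset.mem_filter.mpr ⟨support_closed hf σ⁻¹ hdS, ?_⟩
    rw [mapDomain_edgeMap_support, hds, image_image_edgeMap, inv_mul_cancel, image_edgeMap_one]
  · intro d hd
    obtain ⟨hdS, hds⟩ := Finset.mem_filter.mp hd
    refine Finset.mem_filter.mpr ⟨support_closed hf σ hdS, ?_⟩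
    rw [mapDomain_edgeMap_support, hds]
  · intro d _
    exact mapDomain_edgeMap_inv' σ d
  · intro d _
    exact mapDomain_edgeMap_inv σ d

set_option maxHeartbeats 2000000 in
lemma eval_deg3_eq {f : MvPolynomial (Edge 4) (ZMod 2)} (hf : IsInv f) {n : ℕ} (hn : n ≤ 3)
    (hh : f.IsHomogeneous n) : eval (ind U8) f = eval (ind ∅) f := by
  rw [eval_ind_eq, eval_ind_eq]
  -- cardinality bound on supports
  have hcard : ∀ d ∈ f.support, d.support.card ≤ 3 := by
    intro d hd
    have hw : Finsupp.degree d = n := by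
      rw [Finsupp.degree_eq_weight_one]
      exact hh (MvPolynomial.mem_support_iff.mp hd)
    have h1 : d.support.card ≤ Finsupp.degree d := by
      unfold Finsupp.degree
      rw [Finset.card_eq_sum_ones]
      exact Finset.sum_le_sum fun i hi => Nat.one_le_iff_ne_zero.mpr (Finsupp.mem_support_iff.mp hi)
    omega
  -- step 1 : regroup by the support
  have step : ∀ W : Finset (Edge 4),
      (∑ d ∈ f.support, (if d.support ⊆ W then (1 : ZMod 2) else 0))
        = ∑ A ∈ f.support.image Finsupp.support,
            ((f.support.filter (fun d => d.support = A)).card : ZMod 2)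
              * (if A ⊆ W then 1 else 0) := by
    intro W
    have hfw := Finset.sum_fiberwise_of_maps_to (s := f.support)
      (t := f.support.image Finsupp.support) (g := Finsupp.support)
      (fun d hd => Finset.mem_image_of_mem Finsupp.support hd)
      (fun d => if d.support ⊆ W then (1 : ZMod 2) else 0)
    rw [← hfw]
    refine Finset.sum_congr rfl fun A _ => ?_
    rw [Finset.sum_congr rfl (fun d hd => by rw [(Finset.mem_filter.mp hd).2]),
      Finset.sum_const, nsmul_eq_mul]
  rw [step, step]
  -- step 2 : regroup by the orbit
  set T := f.support.image Finsupp.support with hT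
  have hTclosed : ∀ A ∈ T, ∀ σ : Equiv.Perm (Fin 4), A.image (edgeMap σ) ∈ T := by
    intro A hA σ
    obtain ⟨d, hd, rfl⟩ := Finset.mem_image.mp hA
    exact Finset.mem_image.mpr ⟨Finsupp.mapDomain (edgeMap σ) d, support_closed hf σ hd,
      mapDomain_edgeMap_support σ d⟩
  have hTmaps : ∀ A ∈ T, orbitF A ∈ T.image orbitF := fun A hA => Finset.mem_image_of_mem _ hA
  rw [← Finset.sum_fiberwise_of_maps_to hTmaps, ← Finset.sum_fiberwise_of_maps_to hTmaps]
  refine Finset.sum_congr rfl fun O hO => ?_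
  obtain ⟨A₀, hA₀T, rfl⟩ := Finset.mem_image.mp hO
  have hfiber : T.filter (fun A => orbitF A = orbitF A₀) = orbitF A₀ := by
    ext B
    simp only [Finset.mem_filter]
    constructor
    · rintro ⟨_, hBO⟩
      rw [← hBO]
      exact mem_orbitF_self B
    · intro hB
      obtain ⟨σ, _, rfl⟩ := Finset.mem_image.mp hB
      exact ⟨hTclosed A₀ hA₀T σ, orbitF_image σ A₀⟩
  rw [hfiber]
  -- step 3 : the coefficient multiplicity is constant on the orbit
  have hc : ∀ A ∈ orbitF A₀,
      ((f.support.filter (fun d => d.support = A)).card : ZMod 2)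
        = ((f.support.filter (fun d => d.support = A₀)).card : ZMod 2) := by
    intro A hA
    obtain ⟨σ, _, rfl⟩ := Finset.mem_image.mp hA
    rw [card_fiber_eq f hf σ A₀]
  have factor : ∀ W : Finset (Edge 4),
      (∑ A ∈ orbitF A₀, ((f.support.filter (fun d => d.support = A)).card : ZMod 2)
          * (if A ⊆ W then 1 else 0))
        = ((f.support.filter (fun d => d.support = A₀)).card : ZMod 2)
          * (((orbitF A₀).filter (· ⊆ W)).card : ZMod 2) := by
    intro W
    calc (∑ A ∈ orbitF A₀, ((f.support.filter (fun d => d.support = A)).card : ZMod 2)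
            * (if A ⊆ W then 1 else 0))
        = ∑ A ∈ orbitF A₀, ((f.support.filter (fun d => d.support = A₀)).card : ZMod 2)
            * (if A ⊆ W then 1 else 0) :=
          Finset.sum_congr rfl (fun A hA => by rw [hc A hA])
      _ = ((f.support.filter (fun d => d.support = A₀)).card : ZMod 2)
            * (∑ A ∈ orbitF A₀, if A ⊆ W then (1 : ZMod 2) else 0) :=
          (Finset.mul_sum _ _ _).symm
      _ = ((f.support.filter (fun d => d.support = A₀)).card : ZMod 2)
            * (((orbitF A₀).filter (· ⊆ W)).card : ZMod 2) := by
          rw [Finset.sum_boole]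
  have hA3 : A₀.card ≤ 3 := by
    obtain ⟨d₀, hd₀, rfl⟩ := Finset.mem_image.mp hA₀T
    exact hcard d₀ hd₀
  have hk := fact_key A₀ hA3
  have hcc : ((f.support.filter (fun d => d.support = A₀)).card : ZMod 2)
        * (((orbitF A₀).filter (· ⊆ U8)).card : ZMod 2)
      = ((f.support.filter (fun d => d.support = A₀)).card : ZMod 2)
        * (((orbitF A₀).filter (· ⊆ (∅ : Finset (Edge 4)))).card : ZMod 2) := by
    refine congrArg (fun t => ((f.support.filter (fun d => d.support = A₀)).card : ZMod 2) * t) ?_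
    calc (((orbitF A₀).filter (· ⊆ U8)).card : ZMod 2)
        = ((((orbitF A₀).filter (· ⊆ U8)).card % 2 : ℕ) : ZMod 2) :=
          (ZMod.natCast_mod _ 2).symm
      _ = ((((orbitF A₀).filter (· ⊆ (∅ : Finset (Edge 4)))).card % 2 : ℕ) : ZMod 2) := by
          rw [hk]
      _ = (((orbitF A₀).filter (· ⊆ (∅ : Finset (Edge 4)))).card : ZMod 2) :=
          ZMod.natCast_mod _ 2
  exact (factor U8).trans (hcc.trans (factor ∅).symm)

end DegreeThree
section Assemble

lemma inv_f1 : IsInv f1 := isInv_orbitSum _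
lemma inv_f2 : IsInv f2 := isInv_orbitSum _
lemma inv_f3 : IsInv f3 := isInv_orbitSum _
lemma inv_f4 : IsInv f4 := isInv_orbitSum _
lemma inv_f5 : IsInv f5 := isInv_orbitSum _
lemma inv_f8 : IsInv f8 := isInv_orbitSum _
lemma inv_f48 : IsInv (f4 + f8) := fun σ => by rw [map_add, inv_f4 σ, inv_f8 σ]
lemma inv_f58 : IsInv (f5 + f8) := fun σ => by rw [map_add, inv_f5 σ, inv_f8 σ]

lemma eval_f1 (u : Edge 4 → ZMod 2) : eval u f1 = GD D1 u := by rw [f1_eq, eval_sumProd]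
lemma eval_f2 (u : Edge 4 → ZMod 2) : eval u f2 = GD D2 u := by rw [f2_eq, eval_sumProd]
lemma eval_f3 (u : Edge 4 → ZMod 2) : eval u f3 = GD D3 u := by rw [f3_eq, eval_sumProd]
lemma eval_f4 (u : Edge 4 → ZMod 2) : eval u f4 = GD D4 u := by rw [f4_eq, eval_sumProd]
lemma eval_f5 (u : Edge 4 → ZMod 2) : eval u f5 = GD D5 u := by rw [f5_eq, eval_sumProd]
lemma eval_f8 (u : Edge 4 → ZMod 2) : eval u f8 = GD D8 u := by rw [f8_eq, eval_sumProd]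
lemma eval_f48 (u : Edge 4 → ZMod 2) : eval u (f4 + f8) = GD D4 u + GD D8 u := by
  rw [map_add, eval_f4, eval_f8]
lemma eval_f58 (u : Edge 4 → ZMod 2) : eval u (f5 + f8) = GD D5 u + GD D8 u := by
  rw [map_add, eval_f5, eval_f8]

lemma transfer {g : MvPolynomial (Edge 4) (ZMod 2)} (hg : IsInv g) {u v : Edge 4 → ZMod 2}
    {i j : Fin 11} (hui : GraphSameOrbit u (reps i)) (hvj : GraphSameOrbit v (reps j))
    (hne : eval (reps i) g ≠ eval (reps j) g) : eval u g ≠ eval v g := by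
  rw [eval_eq_of_gso hui hg, eval_eq_of_gso hvj hg]
  exact hne

end Assemble

/-- `S_3 = {f1, f2, f3, f4 + f8}` and `S_4 = {f1, f2, f3, f5 + f8}` are
separating sets for `F_2[V]^{S_4}` of the smallest possible size `4`; in particular
`β_sep(F_2[V]^{S_4}) = 4`. -/
theorem stmt10 :
    -- S_3 and S_4 are separating sets
    IsSepGraph {f1, f2, f3, f4 + f8} ∧
    IsSepGraph {f1, f2, f3, f5 + f8} ∧
    -- of the smallest possible size: any separating set of invariants has ≥ 4 elements
    (∀ S : Finset (MvPolynomial (Edge 4) (ZMod 2)),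
      (∀ f ∈ S, IsInv f) → IsSepGraph (S : Set (MvPolynomial (Edge 4) (ZMod 2))) →
      4 ≤ S.card) ∧
    -- β_sep = 4: homogeneous invariants of degree ≤ 4 separate, and 4 is least
    IsSepGraph (HomInv 4) ∧ (∀ d < 4, ¬ IsSepGraph (HomInv d)) := by
  refine ⟨?_, ?_, ?_, ?_, ?_⟩
  · -- S_3 separates
    intro u v h
    obtain ⟨i, j, hij, hui, hvj⟩ := sep_engine h
    rcases fact_sep3 i j hij with hk | hk | hk | hk
    · exact ⟨f1, by simp, transfer inv_f1 hui hvj (by rw [eval_f1, eval_f1]; exact hk)⟩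
    · exact ⟨f2, by simp, transfer inv_f2 hui hvj (by rw [eval_f2, eval_f2]; exact hk)⟩
    · exact ⟨f3, by simp, transfer inv_f3 hui hvj (by rw [eval_f3, eval_f3]; exact hk)⟩
    · exact ⟨f4 + f8, by simp,
        transfer inv_f48 hui hvj (by rw [eval_f48, eval_f48]; exact hk)⟩
  · -- S_4 separates
    intro u v h
    obtain ⟨i, j, hij, hui, hvj⟩ := sep_engine h
    rcases fact_sep4 i j hij with hk | hk | hk | hk
    · exact ⟨f1, by simp, transfer inv_f1 hui hvj (by rw [eval_f1, eval_f1]; exact hk)⟩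
    · exact ⟨f2, by simp, transfer inv_f2 hui hvj (by rw [eval_f2, eval_f2]; exact hk)⟩
    · exact ⟨f3, by simp, transfer inv_f3 hui hvj (by rw [eval_f3, eval_f3]; exact hk)⟩
    · exact ⟨f5 + f8, by simp,
        transfer inv_f58 hui hvj (by rw [eval_f58, eval_f58]; exact hk)⟩
  · -- lower bound on the size of separating sets
    intro S _ hSsep
    by_contra hlt
    push_neg at hlt
    classical
    have hF : Function.Injective (fun i : Fin 11 => fun f : ↥S => eval (reps i) f.1) := by
      intro i j hij
      by_contra hne
      obtain ⟨f, hfS, hfne⟩ := hSsep (reps i) (reps j) (fact_pairwise i j hne)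
      exact hfne (congrFun hij ⟨f, hfS⟩)
    have hcard := Fintype.card_le_of_injective _ hF
    rw [Fintype.card_fin, Fintype.card_fun, Fintype.card_coe] at hcard
    have h2 : (2 : ℕ) ^ S.card ≤ 2 ^ 3 := Nat.pow_le_pow_right (by norm_num) (by omega)
    have h3 : Fintype.card (ZMod 2) = 2 := by decide
    rw [h3] at hcard
    omega
  · -- HomInv 4 separates
    intro u v h
    obtain ⟨i, j, hij, hui, hvj⟩ := sep_engine h
    have m1 : f1 ∈ HomInv 4 := ⟨inv_f1, 1, by norm_num,
      by rw [f1_eq]; exact homog_sumProd D1 1 (by decide)⟩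
    have m2 : f2 ∈ HomInv 4 := ⟨inv_f2, 2, by norm_num,
      by rw [f2_eq]; exact homog_sumProd D2 2 (by decide)⟩
    have m3 : f3 ∈ HomInv 4 := ⟨inv_f3, 2, by norm_num,
      by rw [f3_eq]; exact homog_sumProd D3 2 (by decide)⟩
    have m4 : f4 ∈ HomInv 4 := ⟨inv_f4, 3, by norm_num,
      by rw [f4_eq]; exact homog_sumProd D4 3 (by decide)⟩
    have m8 : f8 ∈ HomInv 4 := ⟨inv_f8, 4, by norm_num,
      by rw [f8_eq]; exact homog_sumProd D8 4 (by decide)⟩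
    rcases fact_sep5 i j hij with hk | hk | hk | hk | hk
    · exact ⟨f1, m1, transfer inv_f1 hui hvj (by rw [eval_f1, eval_f1]; exact hk)⟩
    · exact ⟨f2, m2, transfer inv_f2 hui hvj (by rw [eval_f2, eval_f2]; exact hk)⟩
    · exact ⟨f3, m3, transfer inv_f3 hui hvj (by rw [eval_f3, eval_f3]; exact hk)⟩
    · exact ⟨f4, m4, transfer inv_f4 hui hvj (by rw [eval_f4, eval_f4]; exact hk)⟩
    · exact ⟨f8, m8, transfer inv_f8 hui hvj (by rw [eval_f8, eval_f8]; exact hk)⟩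
  · -- degree ≤ 3 does not separate
    intro d hd hsep
    obtain ⟨f, hfmem, hfne⟩ := hsep (ind U8) (ind ∅) fact_notorbit
    obtain ⟨hfinv, n, hn, hhom⟩ := hfmem
    exact hfne (eval_deg3_eq hfinv (by omega) hhom)

end S4graphs
end
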